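/- Let m ≥ 1 be an integer and let R_m = ℤ[h][X]/(X^{m+1}). For 1 ≤ i ≤ m+1 set u_i = X^{m+1−i}(h+X)^{i−1} ∈ R_m. Then u_{m+1}^2 = Σ_{k=1}^{m+1} C(2m−k, m−1) h^m u_k in R_m, where C(p,q) denotes the binomial coefficient. -/
import Mathlib


open Polynomial Finset

lemma key_sum_csm (a : ℕ) : ∀ b n : ℕ,
    ∑ i ∈ range (n + 1), (a + i).choose i * (b + (n - i)).choose (n - i) =
      (a + b + n + 1).choose n := by
  induction a with
  | zero =>
    intro b n
    have h1 : ∀ i ∈ range (n + 1), (0 + i).choose i * (b + (n - i)).choose (n - i)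
        = (fun j => (j + b).choose b) (n - i) := by
      intro i hi
      simp only [zero_add, Nat.choose_self, one_mul]
      rw [add_comm b, Nat.choose_symm_add]
    rw [sum_congr rfl h1]
    have h2 : ∑ i ∈ range (n + 1), (fun j => (j + b).choose b) (n - i)
        = ∑ i ∈ range (n + 1), (i + b).choose b := by
      rw [← Finset.sum_range_reflect]
      apply sum_congr rfl
      intro i hi
      simp only [mem_range] at hi
      congr 2
      omega
    rw [h2, Nat.sum_range_add_choose]
    rw [show 0 + b + n + 1 = n + b + 1 by ring,
      ← Nat.choose_symm (show n ≤ n + b + 1 by omega)]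
    congr 1
    omega
  | succ a ih =>
    intro b n
    induction n with
    | zero => simp
    | succ n ihn =>
      rw [Finset.sum_range_succ']
      have h1 : ∀ i ∈ range (n + 1),
          (a + 1 + (i + 1)).choose (i + 1) * (b + (n + 1 - (i + 1))).choose (n + 1 - (i + 1))
          = (a + (i + 1)).choose (i + 1) * (b + (n + 1 - (i + 1))).choose (n + 1 - (i + 1))
            + (a + 1 + i).choose i * (b + (n - i)).choose (n - i) := by
        intro i hi
        have e : (a + 1 + (i + 1)).choose (i + 1)
            = (a + (i + 1)).choose (i + 1) + (a + 1 + i).choose i := by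
          rw [show a + 1 + (i + 1) = (a + i + 1) + 1 by ring, Nat.choose_succ_succ,
            show a + (i + 1) = a + i + 1 by ring, show a + 1 + i = a + i + 1 by ring]
          simp only [Nat.succ_eq_add_one]
          omega
        have e2 : n + 1 - (i + 1) = n - i := by omega
        rw [e, add_mul, e2]
      rw [sum_congr rfl h1, Finset.sum_add_distrib]
      have h2 : ∑ i ∈ range (n + 1),
          (a + (i + 1)).choose (i + 1) * (b + (n + 1 - (i + 1))).choose (n + 1 - (i + 1))
            + (a + 1 + 0).choose 0 * (b + (n + 1 - 0)).choose (n + 1 - 0)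
          = ∑ i ∈ range (n + 1 + 1),
            (a + i).choose i * (b + (n + 1 - i)).choose (n + 1 - i) := by
        rw [Finset.sum_range_succ' _ (n + 1)]
        simp
      rw [add_right_comm, h2, ih b (n + 1), ihn]
      rw [show a + 1 + b + (n + 1) + 1 = (a + b + n + 2) + 1 by ring,
        show a + b + (n + 1) + 1 = a + b + n + 2 by ring,
        show a + 1 + b + n + 1 = a + b + n + 2 by ring]
      have p1 := Nat.choose_succ_succ (a + b + n + 2) n
      simp only [Nat.succ_eq_add_one] at p1
      omega

/-- In `R_m = ℤ[h][X]/(X^(m+1))`, with `u_i = X^(m+1-i) (h+X)^(i-1)`, one has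
`u_(m+1)^2 = ∑_k C(2m-k, m-1) h^m u_k`. -/
theorem csm_structure_constants_proj_open_cell (m : ℕ) (hm : 1 ≤ m) :
    Ideal.Quotient.mk (Ideal.span {(X : (ℤ[X])[X]) ^ (m + 1)})
        ((C X + X) ^ m * (C X + X) ^ m) =
      ∑ k ∈ Finset.Icc 1 (m + 1),
        Ideal.Quotient.mk (Ideal.span {(X : (ℤ[X])[X]) ^ (m + 1)})
          (C (((2 * m - k).choose (m - 1) : ℤ[X]) * X ^ m) *
            (X ^ (m + 1 - k) * (C X + X) ^ (k - 1))) := by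
  rw [← map_sum, Ideal.Quotient.eq, Ideal.mem_span_singleton, Polynomial.X_pow_dvd_iff]
  intro d hd
  have hdm : d ≤ m := by omega
  rw [coeff_sub, sub_eq_zero, ← pow_add, finset_sum_coeff]
  -- left-hand side coefficient
  have hL : ((C (X : ℤ[X]) + X) ^ (m + m)).coeff d
      = X ^ (m + m - d) * ((m + m).choose d : ℤ[X]) := by
    rw [add_comm (C (X : ℤ[X])) X, coeff_X_add_C_pow]
  -- right-hand side term coefficients
  have hR : ∀ k ∈ Finset.Icc 1 (m + 1),
      (C (((2 * m - k).choose (m - 1) : ℤ[X]) * X ^ m) *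
          (X ^ (m + 1 - k) * (C X + X) ^ (k - 1))).coeff d
      = if m + 1 - k ≤ d then
          ((2 * m - k).choose (m - 1) : ℤ[X]) * X ^ m *
            (X ^ (k - 1 - (d - (m + 1 - k))) * ((k - 1).choose (d - (m + 1 - k)) : ℤ[X]))
        else 0 := by
    intro k hk
    rw [coeff_C_mul, coeff_X_pow_mul', add_comm (C (X : ℤ[X])) X]
    split_ifs with h
    · rw [coeff_X_add_C_pow]
    · rw [mul_zero]
  rw [sum_congr rfl hR]
  -- restrict the sum
  have hsub : Finset.Icc (m + 1 - d) (m + 1) ⊆ Finset.Icc 1 (m + 1) :=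
    Finset.Icc_subset_Icc_left (by omega)
  rw [← Finset.sum_subset hsub (by
    intro k hk hk'
    simp only [Finset.mem_Icc] at hk hk'
    rw [if_neg (by omega)])]
  have hpos : ∀ k ∈ Finset.Icc (m + 1 - d) (m + 1),
      (if m + 1 - k ≤ d then
          ((2 * m - k).choose (m - 1) : ℤ[X]) * X ^ m *
            (X ^ (k - 1 - (d - (m + 1 - k))) * ((k - 1).choose (d - (m + 1 - k)) : ℤ[X]))
        else 0)
      = X ^ (m + m - d) *
          (((m - 1 + (d - (k - (m + 1 - d)))).choose (m - 1) : ℤ[X]) *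
            ((m - d + (k - (m + 1 - d))).choose (k - (m + 1 - d)) : ℤ[X])) := by
    intro k hk
    simp only [Finset.mem_Icc] at hk
    rw [if_pos (by omega)]
    have e1 : 2 * m - k = m - 1 + (d - (k - (m + 1 - d))) := by omega
    have e2 : k - 1 - (d - (m + 1 - k)) = m - d := by omega
    have e3 : k - 1 = m - d + (k - (m + 1 - d)) := by omega
    have e4 : d - (m + 1 - k) = k - (m + 1 - d) := by omega
    rw [e1, e2, e3, e4, show m + m - d = m + (m - d) by omega, pow_add]
    ring
  rw [sum_congr rfl hpos, ← Finset.mul_sum, hL]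
  congr 1
  -- now a purely combinatorial identity
  rw [← Finset.Ico_add_one_right_eq_Icc, Finset.sum_Ico_eq_sum_range]
  rw [show m + 1 + 1 - (m + 1 - d) = d + 1 by omega]
  have : ∀ t ∈ range (d + 1),
      (((m - 1 + (d - (m + 1 - d + t - (m + 1 - d)))).choose (m - 1) : ℤ[X]) *
        ((m - d + (m + 1 - d + t - (m + 1 - d))).choose (m + 1 - d + t - (m + 1 - d)) : ℤ[X]))
      = (((m - d + t).choose t * (m - 1 + (d - t)).choose (d - t) : ℕ) : ℤ[X]) := by
    intro t ht
    simp only [mem_range] at ht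
    rw [show m + 1 - d + t - (m + 1 - d) = t by omega]
    rw [show (m - 1 + (d - t)).choose (m - 1) = (m - 1 + (d - t)).choose (d - t) from
      Nat.choose_symm_add]
    push_cast
    ring
  rw [sum_congr rfl this, ← Nat.cast_sum]
  rw [key_sum_csm (m - d) (m - 1) d, show m - d + (m - 1) + d + 1 = m + m by omega]
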